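/- Let $A$ be a commutative ring, let $b_1, \dots, b_d \in A$ be a regular sequence ($d \geq 2$), and let $Q = (b_1, \dots, b_d)$. If an element $x \in A$ satisfies $b_d^2 x \in (b_1) + (b_2, \dots, b_{d-1})^2$, then $x \in (b_1) + (b_2, \dots, b_{d-1})^2$. -/

import Mathlib

section Aux
variable {A : Type*} [CommRing A]

/-- Prefix ideal generated by `y 0, …, y (k-1)`. -/
def auxJn (y : ℕ → A) (k : ℕ) : Ideal A := Ideal.span (y '' Set.Iio k)

lemma auxJn_zero (y : ℕ → A) : auxJn y 0 = ⊥ := by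
  have : (Set.Iio 0 : Set ℕ) = ∅ := by ext i; simp
  simp [auxJn, this]

lemma auxJn_succ (y : ℕ → A) (k : ℕ) :
    auxJn y (k + 1) = auxJn y k ⊔ Ideal.span {y k} := by
  unfold auxJn
  rw [← Ideal.span_union]
  congr 1
  have : (Set.Iio (k+1) : Set ℕ) = Set.Iio k ∪ {k} := by ext i; simp
  rw [this, Set.image_union]
  simp

lemma auxJn_mono (y : ℕ → A) {k m : ℕ} (h : k ≤ m) : auxJn y k ≤ auxJn y m :=
  Ideal.span_mono (Set.image_mono fun _ hi => lt_of_lt_of_le hi h)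

lemma mem_auxJn_gen (y : ℕ → A) {i k : ℕ} (h : i < k) : y i ∈ auxJn y k :=
  Ideal.subset_span ⟨i, h, rfl⟩

lemma mem_auxJn_iff (y : ℕ → A) (k : ℕ) (x : A) :
    x ∈ auxJn y k ↔ ∃ c : ℕ → A, ∑ i ∈ Finset.range k, c i * y i = x := by
  have hset : y '' Set.Iio k = Set.range (fun i : Fin k => y i) := by
    ext r
    constructor
    · rintro ⟨i, hi, rfl⟩; exact ⟨⟨i, hi⟩, rfl⟩
    · rintro ⟨i, rfl⟩; exact ⟨i, i.isLt, rfl⟩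
  rw [auxJn, hset, Ideal.mem_span_range_iff_exists_fun]
  constructor
  · rintro ⟨c, hc⟩
    refine ⟨fun i => if h : i < k then c ⟨i, h⟩ else 0, ?_⟩
    rw [Finset.sum_range fun i => _]
    rw [← hc]
    refine Finset.sum_congr rfl fun i _ => ?_
    show (if h : (i:ℕ) < k then c ⟨(i:ℕ), h⟩ else 0) * y i = c i * y i
    rw [dif_pos i.isLt]
  · rintro ⟨c, hc⟩
    refine ⟨fun i => c i, ?_⟩
    rw [← hc, Finset.sum_range fun i => c i * y i]

lemma aux_sq_decomp (I₀ : Ideal A) (y : ℕ → A) (k : ℕ) :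
    I₀ ⊔ (auxJn y (k + 1)) ^ 2 =
      (I₀ ⊔ (auxJn y k) ^ 2) ⊔ Ideal.span {y k} * auxJn y (k + 1) := by
  rw [auxJn_succ]
  set a := auxJn y k
  set s := Ideal.span {y k}
  have key : (a ⊔ s) ^ 2 = a ^ 2 ⊔ s * (a ⊔ s) := by
    rw [pow_two, pow_two, Ideal.sup_mul, Ideal.mul_sup, sup_assoc]
    congr 1
    rw [sup_eq_right]
    rw [mul_comm]
    exact Ideal.mul_mono le_rfl le_sup_left
  rw [key, sup_assoc]

/-- Degree-1 quasi-regularity relative to a base ideal `I₀`. -/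
lemma aux_quasireg (I₀ : Ideal A) (y : ℕ → A) (m : ℕ)
    (hN : ∀ k < m, ∀ x : A, y k * x ∈ I₀ ⊔ auxJn y k → x ∈ I₀ ⊔ auxJn y k) :
    ∀ k ≤ m, ∀ a : ℕ → A,
      (∑ i ∈ Finset.range k, a i * y i) ∈ I₀ ⊔ (auxJn y k) ^ 2 →
      ∀ i < k, a i ∈ I₀ ⊔ auxJn y k := by
  intro k
  induction k with
  | zero => intro _ _ _ i hi; omega
  | succ k ih =>
    intro hkm a hsum i hik
    have hkm' : k ≤ m := by omega
    have hkltm : k < m := by omega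
    -- decompose the membership
    rw [aux_sq_decomp] at hsum
    obtain ⟨p, hp, w, hw, hpw⟩ := Submodule.mem_sup.mp hsum
    obtain ⟨q, hq, hwq⟩ := Ideal.mem_span_singleton_mul.mp hw
    have hsum' : ∑ j ∈ Finset.range k, a j * y j + a k * y k = p + y k * q := by
      rw [← Finset.sum_range_succ, ← hpw, ← hwq]
    -- membership of the prefix sum
    have hprefix : ∑ j ∈ Finset.range k, a j * y j ∈ auxJn y k :=
      Ideal.sum_mem _ fun j hj =>
        Ideal.mul_mem_left _ _ (mem_auxJn_gen y (Finset.mem_range.mp hj))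
    have hp' : p ∈ I₀ ⊔ auxJn y k :=
      sup_le_sup_left (Ideal.pow_le_self two_ne_zero) I₀ hp
    have hkey : y k * (a k - q) ∈ I₀ ⊔ auxJn y k := by
      have : y k * (a k - q) = p - ∑ j ∈ Finset.range k, a j * y j := by
        linear_combination hsum'
      rw [this]
      exact Submodule.sub_mem _ hp' ((le_sup_right : auxJn y k ≤ I₀ ⊔ auxJn y k) hprefix)
    have hakq : a k - q ∈ I₀ ⊔ auxJn y k := hN k hkltm _ hkey
    by_cases hik' : i = k
    · -- conclusion for the last index
      rw [hik']
      have hq' : q ∈ I₀ ⊔ auxJn y (k + 1) := (le_sup_right : auxJn y (k+1) ≤ I₀ ⊔ auxJn y (k+1)) hq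
      have hthis : a k - q ∈ I₀ ⊔ auxJn y (k + 1) :=
        sup_le_sup le_rfl (auxJn_mono y (Nat.le_succ k)) hakq
      simpa using Submodule.add_mem _ hthis hq'
    · have hik2 : i < k := by omega
      -- write a k - q = c₀ + ∑ e j y j
      obtain ⟨c₀, hc₀, t, ht, hct⟩ := Submodule.mem_sup.mp hakq
      obtain ⟨e, he⟩ := (mem_auxJn_iff y k t).mp ht
      -- the modified coefficients
      have hsum2 : ∑ j ∈ Finset.range k, (a j + e j * y k) * y j
          ∈ I₀ ⊔ (auxJn y k) ^ 2 := by
        have heq : ∑ j ∈ Finset.range k, (a j + e j * y k) * y j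
            = p - y k * c₀ := by
          have h1 : ∑ j ∈ Finset.range k, (a j + e j * y k) * y j
              = (∑ j ∈ Finset.range k, a j * y j)
                + y k * (∑ j ∈ Finset.range k, e j * y j) := by
            rw [Finset.mul_sum, ← Finset.sum_add_distrib]
            exact Finset.sum_congr rfl fun j _ => by ring
          rw [h1, he]
          have h2 : t = a k - q - c₀ := by linear_combination hct
          rw [h2]
          linear_combination hsum'
        rw [heq]
        exact Submodule.sub_mem _ hp
          ((le_sup_left : I₀ ≤ I₀ ⊔ (auxJn y k)^2) (Ideal.mul_mem_left _ _ hc₀))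
      have := ih hkm' _ hsum2 i hik2
      have h1 : a i + e i * y k ∈ I₀ ⊔ auxJn y (k + 1) :=
        sup_le_sup le_rfl (auxJn_mono y (Nat.le_succ k)) this
      have h2 : e i * y k ∈ I₀ ⊔ auxJn y (k + 1) :=
        (le_sup_right : auxJn y (k+1) ≤ I₀ ⊔ auxJn y (k+1))
          (Ideal.mul_mem_left _ _ (mem_auxJn_gen y (Nat.lt_succ_self k)))
      simpa using Submodule.sub_mem _ h1 h2

end Aux


section Bridge
variable {A : Type*} [CommRing A]

lemma aux_smulreg_mem (I : Ideal A) (r x : A)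
    (h : IsSMulRegular (A ⧸ (I • ⊤ : Submodule A A)) r) (hx : r * x ∈ I) : x ∈ I := by
  have h0 : (I • ⊤ : Submodule A A) = I := by rw [smul_eq_mul, Ideal.mul_top]
  have h1 : r • (Submodule.Quotient.mk x : A ⧸ (I • ⊤ : Submodule A A)) = r • 0 := by
    rw [smul_zero, ← Submodule.Quotient.mk_smul, Submodule.Quotient.mk_eq_zero, h0]
    simpa [smul_eq_mul] using hx
  have := h h1
  rwa [Submodule.Quotient.mk_eq_zero, h0] at this

lemma aux_take_span {d : ℕ} (b : Fin d → A) {k : ℕ} (hk : k ≤ d) :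
    Ideal.ofList ((List.ofFn b).take k) =
      Ideal.span (b '' {i : Fin d | (i : ℕ) < k}) := by
  unfold Ideal.ofList
  congr 1
  ext r
  simp only [Set.mem_setOf_eq, List.mem_iff_getElem, Set.mem_image]
  constructor
  · rintro ⟨j, hj, rfl⟩
    have hjlen : j < k ∧ j < d := by
      simpa [Nat.lt_min] using hj
    refine ⟨⟨j, hjlen.2⟩, hjlen.1, ?_⟩
    simp [List.getElem_take, List.getElem_ofFn]
  · rintro ⟨i, hi, rfl⟩
    have hlen : i.val < ((List.ofFn b).take k).length := by
      simp only [List.length_take, List.length_ofFn, Nat.lt_min]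
      exact ⟨hi, i.isLt⟩
    refine ⟨i.val, hlen, ?_⟩
    simp [List.getElem_take, List.getElem_ofFn]

lemma aux_nzd {d : ℕ} (b : Fin d → A)
    (hreg : RingTheory.Sequence.IsWeaklyRegular A (List.ofFn b)) {k : ℕ} (hk : k < d)
    (x : A) (hx : b ⟨k, hk⟩ * x ∈ Ideal.span (b '' {i : Fin d | (i : ℕ) < k})) :
    x ∈ Ideal.span (b '' {i : Fin d | (i : ℕ) < k}) := by
  have hk' : k < (List.ofFn b).length := by simpa using hk
  have hr := hreg.regular_mod_prev k hk'
  have hel : (List.ofFn b)[k] = b ⟨k, hk⟩ := by simp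
  rw [hel, aux_take_span b hk.le] at hr
  exact aux_smulreg_mem _ _ _ hr hx

end Bridge

theorem regular_sequence_colon (A : Type*) [CommRing A] (d : ℕ) (hd : 2 ≤ d)
    (b : Fin d → A)
    (hreg : RingTheory.Sequence.IsRegular A (List.ofFn b)) (x : A)
    (hx : b ⟨d - 1, by omega⟩ ^ 2 * x ∈
      Ideal.span {b ⟨0, by omega⟩} ⊔
        (Ideal.span (b '' {i : Fin d | 1 ≤ (i : ℕ) ∧ (i : ℕ) < d - 1})) ^ 2) :
    x ∈ Ideal.span {b ⟨0, by omega⟩} ⊔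
      (Ideal.span (b '' {i : Fin d | 1 ≤ (i : ℕ) ∧ (i : ℕ) < d - 1})) ^ 2 := by
  have hwreg := hreg.toIsWeaklyRegular
  set z : A := b ⟨d - 1, by omega⟩ with hzdef
  set I₀ : Ideal A := Ideal.span {b ⟨0, by omega⟩} with hI0def
  set b' : ℕ → A := fun i => if h : i < d then b ⟨i, h⟩ else 0 with hb'def
  set y : ℕ → A := fun i => b' (i + 1) with hydef
  have hb' : ∀ (i : ℕ) (h : i < d), b' i = b ⟨i, h⟩ := fun i h => dif_pos h
  set m : ℕ := d - 2 with hmdef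
  -- the middle ideal equals `auxJn y m`
  have hJ : Ideal.span (b '' {i : Fin d | 1 ≤ (i : ℕ) ∧ (i : ℕ) < d - 1})
      = auxJn y m := by
    unfold auxJn
    congr 1
    ext r
    constructor
    · rintro ⟨i, ⟨hi1, hi2⟩, rfl⟩
      refine ⟨(i : ℕ) - 1, by simp only [Set.mem_Iio]; omega, ?_⟩
      have hlt : (i : ℕ) - 1 + 1 < d := by omega
      rw [hydef]
      simp only
      rw [hb' _ hlt]
      congr 1
      exact Fin.ext (by simp; omega)
    · rintro ⟨j, hj, rfl⟩
      simp only [Set.mem_Iio] at hj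
      have hlt : j + 1 < d := by omega
      refine ⟨⟨j + 1, hlt⟩, ⟨by simp, by simp; omega⟩, ?_⟩
      rw [hydef]
      simp only
      rw [hb' _ hlt]
  -- prefixes
  have hIJk : ∀ k j : ℕ, k ≤ d - 2 → j = k + 1 →
      I₀ ⊔ auxJn y k = Ideal.span (b '' {i : Fin d | (i : ℕ) < j}) := by
    intro k j hk hj
    rw [hI0def]
    unfold auxJn
    rw [← Ideal.span_union]
    congr 1
    ext r
    constructor
    · rintro (rfl | ⟨i2, hi2, rfl⟩)
      · exact ⟨⟨0, by omega⟩, by simp; omega, rfl⟩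
      · simp only [Set.mem_Iio] at hi2
        have hlt : i2 + 1 < d := by omega
        refine ⟨⟨i2 + 1, hlt⟩, by simp; omega, ?_⟩
        rw [hydef]; simp only; rw [hb' _ hlt]
    · rintro ⟨i, hi, rfl⟩
      simp only [Set.mem_setOf_eq] at hi
      by_cases h0 : (i : ℕ) = 0
      · left
        congr 1
        exact Fin.ext (by simp [h0])
      · right
        have hlt : (i : ℕ) - 1 + 1 < d := by omega
        refine ⟨(i : ℕ) - 1, by simp only [Set.mem_Iio]; omega, ?_⟩
        rw [hydef]; simp only; rw [hb' _ hlt]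
        congr 1
        exact Fin.ext (by simp; omega)
  -- regularity of middle elements
  have hN : ∀ k < m, ∀ w : A, y k * w ∈ I₀ ⊔ auxJn y k → w ∈ I₀ ⊔ auxJn y k := by
    intro k hk w hw
    rw [hIJk k (k + 1) (by omega) rfl] at hw ⊢
    have hkd : k + 1 < d := by omega
    have hyk : y k = b ⟨k + 1, hkd⟩ := by rw [hydef]; simp only; rw [hb' _ hkd]
    rw [hyk] at hw
    exact aux_nzd b hwreg hkd w hw
  -- regularity of the last element
  have hNz : ∀ w : A, z * w ∈ I₀ ⊔ auxJn y m → w ∈ I₀ ⊔ auxJn y m := by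
    intro w hw
    rw [hIJk m (d - 1) (by omega) (by omega)] at hw ⊢
    have hdd : d - 1 < d := by omega
    exact aux_nzd b hwreg hdd w hw
  -- rewrite the hypothesis
  rw [hJ] at hx ⊢
  have hle : I₀ ⊔ (auxJn y m) ^ 2 ≤ I₀ ⊔ auxJn y m :=
    sup_le_sup_left (Ideal.pow_le_self two_ne_zero) I₀
  have h2 : z * x ∈ I₀ ⊔ auxJn y m := by
    refine hNz _ ?_
    have hzz : z * (z * x) = z ^ 2 * x := by ring
    rw [hzz]
    exact hle hx
  have h3 : x ∈ I₀ ⊔ auxJn y m := hNz x h2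
  obtain ⟨c₀, hc₀, t, ht, hct⟩ := Submodule.mem_sup.mp h3
  obtain ⟨a, ha⟩ := (mem_auxJn_iff y m t).mp ht
  have hsum : (∑ i ∈ Finset.range m, (z ^ 2 * a i) * y i) ∈ I₀ ⊔ (auxJn y m) ^ 2 := by
    have heq : ∑ i ∈ Finset.range m, (z ^ 2 * a i) * y i = z ^ 2 * x - z ^ 2 * c₀ := by
      have hfac : ∑ i ∈ Finset.range m, (z ^ 2 * a i) * y i
          = z ^ 2 * ∑ i ∈ Finset.range m, a i * y i := by
        rw [Finset.mul_sum]
        exact Finset.sum_congr rfl fun i _ => by ring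
      rw [hfac, ha]
      have hxt : x = c₀ + t := hct.symm
      rw [hxt]; ring
    rw [heq]
    exact Submodule.sub_mem _ hx
      ((le_sup_left : I₀ ≤ I₀ ⊔ (auxJn y m) ^ 2) (Ideal.mul_mem_left _ _ hc₀))
  have hcoef := aux_quasireg I₀ y m hN m le_rfl _ hsum
  have hai : ∀ i, i < m → a i ∈ I₀ ⊔ auxJn y m := by
    intro i hi
    refine hNz _ (hNz _ ?_)
    have hzz : z * (z * a i) = z ^ 2 * a i := by ring
    rw [hzz]
    exact hcoef i hi
  rw [← hct, ← ha]
  refine Submodule.add_mem _ ((le_sup_left : I₀ ≤ I₀ ⊔ (auxJn y m) ^ 2) hc₀)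
    (Ideal.sum_mem _ fun i hi => ?_)
  have hi' := Finset.mem_range.mp hi
  have h5 : a i * y i ∈ (I₀ ⊔ auxJn y m) * auxJn y m :=
    Ideal.mul_mem_mul (hai i hi') (mem_auxJn_gen y hi')
  have h6 : (I₀ ⊔ auxJn y m) * auxJn y m ≤ I₀ ⊔ (auxJn y m) ^ 2 := by
    rw [Ideal.sup_mul, pow_two]
    exact sup_le (le_trans (Ideal.mul_le_left : I₀ * auxJn y m ≤ I₀) le_sup_left) le_sup_right
  exact h6 h5
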